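/- For positive integers a, b, c with a ≤ b, Proctor's product ∏_{i=1}^{a} [ ∏_{j=1}^{b-a+1} (c+i+j-1)/(i+j-1) · ∏_{j=b-a+2}^{b-a+i} (2c+i+j-1)/(i+j-1) ] is a positive integer. -/

import Mathlib

open Finset


def gdiv (d x : ℕ) : ℤ := ((x / d : ℕ) : ℤ)

lemma gdiv_add_mul (d x q : ℕ) (hd : 0 < d) : gdiv d (x + q * d) = gdiv d x + q := by
  unfold gdiv
  rw [Nat.add_mul_div_right _ _ hd]
  push_cast
  ring

lemma sum_shift_swap (h : ℕ → ℤ) (a L : ℕ) :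
    ∑ j ∈ range a, (h (j + L) - h j) = ∑ t ∈ range L, (h (t + a) - h t) := by
  have e1 := Finset.sum_range_add h L a
  have e2 := Finset.sum_range_add h a L
  have e3 : ∑ j ∈ range a, (h (j + L) - h j)
      = ∑ j ∈ range a, h (L + j) - ∑ j ∈ range a, h j := by
    rw [← Finset.sum_sub_distrib]
    exact Finset.sum_congr rfl fun j _ => by rw [Nat.add_comm]
  have e4 : ∑ t ∈ range L, (h (t + a) - h t)
      = ∑ t ∈ range L, h (a + t) - ∑ t ∈ range L, h t := by
    rw [← Finset.sum_sub_distrib]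
    exact Finset.sum_congr rfl fun t _ => by rw [Nat.add_comm]
  rw [e3, e4]
  rw [Nat.add_comm L a] at e1
  linarith [e1, e2]

lemma div_band {d : ℕ} (hd : 0 < d) {y : ℕ} (hy : y < 5 * d) :
    y / d = (if d ≤ y then 1 else 0) + (if 2 * d ≤ y then 1 else 0)
      + (if 3 * d ≤ y then 1 else 0) + (if 4 * d ≤ y then 1 else 0) := by
  rcases Nat.lt_or_ge y d with h1 | h1
  · rw [Nat.div_eq_of_lt h1]; split_ifs <;> omega
  rcases Nat.lt_or_ge y (2 * d) with h2 | h2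
  · rw [(Nat.div_eq_of_lt_le (by omega) (by omega) : y / d = 1)]; split_ifs <;> omega
  rcases Nat.lt_or_ge y (3 * d) with h3 | h3
  · rw [(Nat.div_eq_of_lt_le (by omega) (by omega) : y / d = 2)]; split_ifs <;> omega
  rcases Nat.lt_or_ge y (4 * d) with h4 | h4
  · rw [(Nat.div_eq_of_lt_le (by omega) (by omega) : y / d = 3)]; split_ifs <;> omega
  · rw [(Nat.div_eq_of_lt_le (by omega) (by omega) : y / d = 4)]; split_ifs <;> omega

lemma sum_div_step1 (d : ℕ) (hd : 0 < d) (x : ℕ) :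
    ∀ k : ℕ, x + k ≤ 5 * d →
    ∑ s ∈ range k, (x + s) / d
      = (k - (d - x)) + (k - (2*d - x)) + (k - (3*d - x)) + (k - (4*d - x)) := by
  intro k
  induction k with
  | zero => intro _; simp
  | succ n ih =>
    intro hb
    rw [Finset.sum_range_succ, ih (by omega), div_band hd (show x + n < 5*d by omega)]
    split_ifs <;> omega

lemma sum_div_step2 (d : ℕ) (hd : 0 < d) (x : ℕ) :
    ∀ k : ℕ, x + 2*k ≤ 5 * d →
    ∑ s ∈ range k, (x + 2*s) / d
      = (k - ((d - x)+1)/2) + (k - ((2*d - x)+1)/2) + (k - ((3*d - x)+1)/2)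
        + (k - ((4*d - x)+1)/2) := by
  intro k
  induction k with
  | zero => intro _; simp
  | succ n ih =>
    intro hb
    rw [Finset.sum_range_succ, ih (by omega), div_band hd (show x + 2*n < 5*d by omega)]
    split_ifs <;> omega

set_option maxHeartbeats 1600000 in
lemma closed_form_ineq (d k m' c' : ℕ) (hd : 0 < d) (hk : k < d) (hm' : m' < d) (hc' : c' < d) :
    (0:ℤ) ≤ ((k - ((d - (m'+2*c'))+1)/2) + (k - ((2*d - (m'+2*c'))+1)/2) + (k - ((3*d - (m'+2*c'))+1)/2) + (k - ((4*d - (m'+2*c'))+1)/2) : ℕ)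
      - ((k - ((d - m')+1)/2) + (k - ((2*d - m')+1)/2) + (k - ((3*d - m')+1)/2) + (k - ((4*d - m')+1)/2) : ℕ)
      - ((k - (d - c')) + (k - (2*d - c')) + (k - (3*d - c')) + (k - (4*d - c')) : ℕ)
      + ((k - (d - 0)) + (k - (2*d - 0)) + (k - (3*d - 0)) + (k - (4*d - 0)) : ℕ)
      - ((k - (d - (m'+2*c'))) + (k - (2*d - (m'+2*c'))) + (k - (3*d - (m'+2*c'))) + (k - (4*d - (m'+2*c'))) : ℕ)
      + ((k - (d - (m'+c'))) + (k - (2*d - (m'+c'))) + (k - (3*d - (m'+c'))) + (k - (4*d - (m'+c'))) : ℕ) := by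
  have z1 : k - ((3*d - m')+1)/2 = 0 := by omega
  have z2 : k - ((4*d - m')+1)/2 = 0 := by omega
  have z3 : k - (2*d - c') = 0 := by omega
  have z4 : k - (3*d - c') = 0 := by omega
  have z5 : k - (4*d - c') = 0 := by omega
  have z6 : k - (d - 0) = 0 := by omega
  have z7 : k - (2*d - 0) = 0 := by omega
  have z8 : k - (3*d - 0) = 0 := by omega
  have z9 : k - (4*d - 0) = 0 := by omega
  have z10 : k - (4*d - (m'+2*c')) = 0 := by omega
  have z11 : k - (3*d - (m'+c')) = 0 := by omega
  have z12 : k - (4*d - (m'+c')) = 0 := by omega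
  rw [z1, z2, z3, z4, z5, z6, z7, z8, z9, z10, z11, z12]
  rcases Nat.lt_or_ge (m'+2*c') d with h1 | h1
  · have w1 : k - ((3*d - (m'+2*c'))+1)/2 = 0 := by omega
    have w2 : k - ((4*d - (m'+2*c'))+1)/2 = 0 := by omega
    have w3 : k - (2*d - (m'+2*c')) = 0 := by omega
    have w4 : k - (3*d - (m'+2*c')) = 0 := by omega
    have w5 : k - (2*d - (m'+c')) = 0 := by omega
    rw [w1, w2, w3, w4, w5]
    omega
  rcases Nat.lt_or_ge (m'+2*c') (2*d) with h2 | h2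
  · have v1 : k - ((d - (m'+2*c'))+1)/2 = k := by omega
    have v2 : k - (d - (m'+2*c')) = k := by omega
    have v3 : k - ((4*d - (m'+2*c'))+1)/2 = 0 := by omega
    have v4 : k - (3*d - (m'+2*c')) = 0 := by omega
    rw [v1, v2, v3, v4]
    rcases Nat.lt_or_ge (m'+c') d with h3 | h3
    · have v5 : k - (2*d - (m'+c')) = 0 := by omega
      rw [v5]
      omega
    · have v5 : k - (d - (m'+c')) = k := by omega
      rw [v5]
      omega
  · have u1 : k - ((d - (m'+2*c'))+1)/2 = k := by omega
    have u2 : k - ((2*d - (m'+2*c'))+1)/2 = k := by omega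
    have u3 : k - (d - (m'+2*c')) = k := by omega
    have u4 : k - (2*d - (m'+2*c')) = k := by omega
    have u5 : k - (d - (m'+c')) = k := by omega
    rw [u1, u2, u3, u4, u5]
    omega

set_option maxHeartbeats 1000000 in
lemma key_ineq (d c m a : ℕ) (hd : 0 < d) :
    (0:ℤ) ≤ ∑ t ∈ range a,
      (gdiv d (c+m+t) - gdiv d (c+t) + gdiv d (2*c+m+2*t)
        - gdiv d (2*c+m+t) - gdiv d (m+2*t) + gdiv d t) := by
  obtain ⟨q, k, ha, hk⟩ : ∃ q k, a = k + q * d ∧ k < d :=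
    ⟨a / d, a % d, (Nat.mod_add_div' a d).symm, Nat.mod_lt _ hd⟩
  obtain ⟨qm, m', hm, hm'⟩ : ∃ qm m', m = m' + qm * d ∧ m' < d :=
    ⟨m / d, m % d, (Nat.mod_add_div' m d).symm, Nat.mod_lt _ hd⟩
  obtain ⟨qc, c', hcc, hc'⟩ : ∃ qc c', c = c' + qc * d ∧ c' < d :=
    ⟨c / d, c % d, (Nat.mod_add_div' c d).symm, Nat.mod_lt _ hd⟩
  -- Step 1 : regroup and swap the three partial sums
  have h0 : ∑ t ∈ range a,
      (gdiv d (c+m+t) - gdiv d (c+t) + gdiv d (2*c+m+2*t)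
        - gdiv d (2*c+m+t) - gdiv d (m+2*t) + gdiv d t)
      = (∑ t ∈ range a, (gdiv d (c+(t+m)) - gdiv d (c+t)))
        + (∑ t ∈ range a, (gdiv d (m+2*(t+c)) - gdiv d (m+2*t)))
        - (∑ t ∈ range a, (gdiv d (t+(2*c+m)) - gdiv d t)) := by
    rw [← Finset.sum_add_distrib, ← Finset.sum_sub_distrib]
    refine Finset.sum_congr rfl fun t _ => ?_
    rw [show c+(t+m) = c+m+t by ring, show m+2*(t+c) = 2*c+m+2*t by ring,
        show t+(2*c+m) = 2*c+m+t by ring]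
    ring
  have hα := sum_shift_swap (fun x => gdiv d (c+x)) a m
  have hβ := sum_shift_swap (fun x => gdiv d (m+2*x)) a c
  have hγ := sum_shift_swap (fun x => gdiv d x) a (2*c+m)
  -- Step 2 : split the (2c+m)-window
  have hsplit : ∑ t ∈ range (2*c+m), (gdiv d (t+a) - gdiv d t)
      = (∑ t ∈ range c, (gdiv d (t+a) - gdiv d t))
        + (∑ t ∈ range m, (gdiv d ((c+t)+a) - gdiv d (c+t)))
        + (∑ t ∈ range c, (gdiv d ((c+(m+t))+a) - gdiv d (c+(m+t)))) := by
    rw [show 2*c+m = c+(m+c) by ring, Finset.sum_range_add, Finset.sum_range_add]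
    ring
  -- middle term of split equals the swapped α-sum
  have hmid : ∑ t ∈ range m, (gdiv d (c+(t+a)) - gdiv d (c+t))
      = ∑ t ∈ range m, (gdiv d ((c+t)+a) - gdiv d (c+t)) :=
    Finset.sum_congr rfl fun t _ => by rw [show c+(t+a) = (c+t)+a by ring]
  -- combine: T = Sβ' - (first c-window) - (third c-window)
  have h1 : ∑ t ∈ range a,
      (gdiv d (c+m+t) - gdiv d (c+t) + gdiv d (2*c+m+2*t)
        - gdiv d (2*c+m+t) - gdiv d (m+2*t) + gdiv d t)
      = (∑ t ∈ range c, (gdiv d (m+2*(t+a)) - gdiv d (m+2*t)))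
        - (∑ t ∈ range c, (gdiv d (t+a) - gdiv d t))
        - (∑ t ∈ range c, (gdiv d ((c+(m+t))+a) - gdiv d (c+(m+t)))) := by
    rw [h0, hα, hβ, hγ, hsplit, ← hmid]
    ring
  -- Step 3 : reduce a modulo d, pointwise, and merge into one c-window sum
  have h2 : ∑ t ∈ range a,
      (gdiv d (c+m+t) - gdiv d (c+t) + gdiv d (2*c+m+2*t)
        - gdiv d (2*c+m+t) - gdiv d (m+2*t) + gdiv d t)
      = ∑ t ∈ range c,
          ((gdiv d ((m+2*t)+2*k) - gdiv d (m+2*t))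
            - (gdiv d (t+k) - gdiv d t)
            - (gdiv d ((c+(m+t))+k) - gdiv d (c+(m+t)))) := by
    rw [h1, ← Finset.sum_sub_distrib, ← Finset.sum_sub_distrib]
    refine Finset.sum_congr rfl fun t _ => ?_
    have r1 : gdiv d (m+2*(t+a)) = gdiv d ((m+2*t)+2*k) + (2*q : ℕ) := by
      rw [show m+2*(t+a) = ((m+2*t)+2*k) + (2*q)*d by subst ha; ring]
      exact gdiv_add_mul d _ _ hd
    have r2 : gdiv d (t+a) = gdiv d (t+k) + (q:ℕ) := by
      rw [show t+a = (t+k) + q*d by subst ha; ring]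
      exact gdiv_add_mul d _ _ hd
    have r3 : gdiv d ((c+(m+t))+a) = gdiv d ((c+(m+t))+k) + (q:ℕ) := by
      rw [show (c+(m+t))+a = ((c+(m+t))+k) + q*d by subst ha; ring]
      exact gdiv_add_mul d _ _ hd
    rw [r1, r2, r3]
    push_cast
    ring
  -- Step 4 : swap the three c-window sums into k-window sums
  have sw1 := sum_shift_swap (fun x => gdiv d (m+2*x)) c k
  have sw2 := sum_shift_swap (fun x => gdiv d x) c k
  have sw3 := sum_shift_swap (fun x => gdiv d (c+m+x)) c k
  have h3 : ∑ t ∈ range a,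
      (gdiv d (c+m+t) - gdiv d (c+t) + gdiv d (2*c+m+2*t)
        - gdiv d (2*c+m+t) - gdiv d (m+2*t) + gdiv d t)
      = ∑ t ∈ range k,
          ((gdiv d (m+2*(t+c)) - gdiv d (m+2*t))
            - (gdiv d (t+c) - gdiv d t)
            - (gdiv d (c+m+(t+c)) - gdiv d (c+m+t))) := by
    rw [h2]
    have e : ∑ t ∈ range c,
          ((gdiv d ((m+2*t)+2*k) - gdiv d (m+2*t))
            - (gdiv d (t+k) - gdiv d t)
            - (gdiv d ((c+(m+t))+k) - gdiv d (c+(m+t))))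
        = (∑ t ∈ range c, (gdiv d (m+2*(t+k)) - gdiv d (m+2*t)))
          - (∑ t ∈ range c, (gdiv d (t+k) - gdiv d t))
          - (∑ t ∈ range c, (gdiv d (c+m+(t+k)) - gdiv d (c+m+t))) := by
      rw [← Finset.sum_sub_distrib, ← Finset.sum_sub_distrib]
      refine Finset.sum_congr rfl fun t _ => ?_
      rw [show m+2*(t+k) = (m+2*t)+2*k by ring, show c+m+(t+k) = (c+(m+t))+k by ring,
          show c+m+t = c+(m+t) by ring]
    rw [e, sw1, sw2, sw3, ← Finset.sum_sub_distrib, ← Finset.sum_sub_distrib]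
  -- Step 5 : reduce m and c modulo d pointwise
  have h4 : ∑ t ∈ range a,
      (gdiv d (c+m+t) - gdiv d (c+t) + gdiv d (2*c+m+2*t)
        - gdiv d (2*c+m+t) - gdiv d (m+2*t) + gdiv d t)
      = ∑ t ∈ range k,
          (gdiv d ((m'+2*c')+2*t) - gdiv d (m'+2*t) - gdiv d (c'+t) + gdiv d t
            - gdiv d ((m'+2*c')+t) + gdiv d ((m'+c')+t)) := by
    rw [h3]
    refine Finset.sum_congr rfl fun t _ => ?_
    have r1 : gdiv d (m+2*(t+c)) = gdiv d ((m'+2*c')+2*t) + ((qm+2*qc : ℕ)) := by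
      rw [show m+2*(t+c) = ((m'+2*c')+2*t) + (qm+2*qc)*d by subst hm hcc; ring]
      exact gdiv_add_mul d _ _ hd
    have r2 : gdiv d (m+2*t) = gdiv d (m'+2*t) + (qm:ℕ) := by
      rw [show m+2*t = (m'+2*t) + qm*d by subst hm; ring]
      exact gdiv_add_mul d _ _ hd
    have r3 : gdiv d (t+c) = gdiv d (c'+t) + (qc:ℕ) := by
      rw [show t+c = (c'+t) + qc*d by subst hcc; ring]
      exact gdiv_add_mul d _ _ hd
    have r4 : gdiv d (c+m+(t+c)) = gdiv d ((m'+2*c')+t) + ((qm+2*qc : ℕ)) := by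
      rw [show c+m+(t+c) = ((m'+2*c')+t) + (qm+2*qc)*d by subst hm hcc; ring]
      exact gdiv_add_mul d _ _ hd
    have r5 : gdiv d (c+m+t) = gdiv d ((m'+c')+t) + ((qm+qc : ℕ)) := by
      rw [show c+m+t = ((m'+c')+t) + (qm+qc)*d by subst hm hcc; ring]
      exact gdiv_add_mul d _ _ hd
    rw [r1, r2, r3, r4, r5]
    push_cast
    ring
  -- Step 6 : closed forms and omega
  rw [h4]
  have e6 : ∑ t ∈ range k,
      (gdiv d ((m'+2*c')+2*t) - gdiv d (m'+2*t) - gdiv d (c'+t) + gdiv d t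
        - gdiv d ((m'+2*c')+t) + gdiv d ((m'+c')+t))
      = ((∑ t ∈ range k, ((m'+2*c')+2*t)/d : ℕ) : ℤ)
        - ((∑ t ∈ range k, (m'+2*t)/d : ℕ) : ℤ)
        - ((∑ t ∈ range k, (c'+t)/d : ℕ) : ℤ)
        + ((∑ t ∈ range k, (0+t)/d : ℕ) : ℤ)
        - ((∑ t ∈ range k, ((m'+2*c')+t)/d : ℕ) : ℤ)
        + ((∑ t ∈ range k, ((m'+c')+t)/d : ℕ) : ℤ) := by
    rw [Nat.cast_sum, Nat.cast_sum, Nat.cast_sum, Nat.cast_sum, Nat.cast_sum, Nat.cast_sum,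
        ← Finset.sum_sub_distrib, ← Finset.sum_sub_distrib, ← Finset.sum_add_distrib,
        ← Finset.sum_sub_distrib, ← Finset.sum_add_distrib]
    refine Finset.sum_congr rfl fun t _ => ?_
    rw [show (0+t) = t by omega]
    unfold gdiv
    ring
  rw [e6,
      sum_div_step2 d hd (m'+2*c') k (by omega),
      sum_div_step2 d hd m' k (by omega),
      sum_div_step1 d hd c' k (by omega),
      sum_div_step1 d hd 0 k (by omega),
      sum_div_step1 d hd (m'+2*c') k (by omega),
      sum_div_step1 d hd (m'+c') k (by omega)]
  exact closed_form_ineq d k m' c' hd hk hm' hc'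

lemma count_window (d : ℕ) (x : ℕ) : ∀ L : ℕ,
    (∑ j ∈ range L, (if d ∣ (x + j + 1) then (1:ℤ) else 0)) = gdiv d (x+L) - gdiv d x := by
  intro L
  induction L with
  | zero => simp [gdiv]
  | succ n ih =>
    rw [Finset.sum_range_succ, ih]
    have hs : (x + n + 1) / d = (x+n)/d + if d ∣ (x+n+1) then 1 else 0 := Nat.succ_div
    unfold gdiv
    rw [show x + (n+1) = (x+n)+1 by ring, hs]
    push_cast [apply_ite (Nat.cast : ℕ → ℤ)]
    split_ifs <;> ring

lemma key_ineq' (d c M a : ℕ) (hd : 0 < d) :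
    ∑ i ∈ Icc 1 a, ((gdiv d ((i-1)+(M+1)) - gdiv d (i-1))
        + (gdiv d ((i+M)+(i-1)) - gdiv d (i+M)))
      ≤ ∑ i ∈ Icc 1 a, ((gdiv d ((c+i-1)+(M+1)) - gdiv d (c+i-1))
        + (gdiv d ((2*c+i+M)+(i-1)) - gdiv d (2*c+i+M))) := by
  have base := key_ineq d c (M+1) a hd
  rw [← Finset.Ico_add_one_right_eq_Icc, Finset.sum_Ico_eq_sum_range, Finset.sum_Ico_eq_sum_range,
      show a + 1 - 1 = a from rfl]
  have hL : ∑ t ∈ range a, ((gdiv d ((1+t-1)+(M+1)) - gdiv d (1+t-1))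
        + (gdiv d (((1+t)+M)+((1+t)-1)) - gdiv d ((1+t)+M)))
      = ∑ t ∈ range a, (gdiv d ((M+1)+2*t) - gdiv d t) := by
    refine Finset.sum_congr rfl fun t _ => ?_
    rw [show (1+t-1) = t by omega, show 1+t+M+t = (M+1)+2*t by omega,
        show 1+t+M = t+(M+1) by omega]
    ring
  have hR : ∑ t ∈ range a, ((gdiv d ((c+(1+t)-1)+(M+1)) - gdiv d (c+(1+t)-1))
        + (gdiv d ((2*c+(1+t)+M)+((1+t)-1)) - gdiv d (2*c+(1+t)+M)))
      = ∑ t ∈ range a, ((gdiv d (c+(M+1)+t) - gdiv d (c+t))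
          + (gdiv d (2*c+(M+1)+2*t) - gdiv d (2*c+(M+1)+t))) := by
    refine Finset.sum_congr rfl fun t _ => ?_
    rw [show (c+(1+t)-1) = c+t by omega, show (c+t)+(M+1) = c+(M+1)+t by omega,
        show (2*c+(1+t)+M)+((1+t)-1) = 2*c+(M+1)+2*t by omega,
        show 2*c+(1+t)+M = 2*c+(M+1)+t by omega]
  rw [hL, hR]
  have e : ∑ t ∈ range a, ((gdiv d (c+(M+1)+t) - gdiv d (c+t))
          + (gdiv d (2*c+(M+1)+2*t) - gdiv d (2*c+(M+1)+t)))
      - ∑ t ∈ range a, (gdiv d ((M+1)+2*t) - gdiv d t)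
      = ∑ t ∈ range a, (gdiv d (c+(M+1)+t) - gdiv d (c+t) + gdiv d (2*c+(M+1)+2*t)
          - gdiv d (2*c+(M+1)+t) - gdiv d ((M+1)+2*t) + gdiv d t) := by
    rw [← Finset.sum_sub_distrib]
    exact Finset.sum_congr rfl fun t _ => by ring
  linarith [base, e]

lemma sum_ind_Icc (d x lo hi : ℕ) (h : 1 ≤ lo) (hlohi : lo ≤ hi + 1) :
    ∑ j ∈ Icc lo hi, (if d ∣ (x + j) then (1:ℤ) else 0)
      = gdiv d (x + hi) - gdiv d (x + (lo - 1)) := by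
  rw [← Finset.Ico_add_one_right_eq_Icc, Finset.sum_Ico_eq_sum_range]
  have cw := count_window d (x + (lo-1)) (hi.succ - lo)
  calc ∑ t ∈ range (hi.succ - lo), (if d ∣ (x + (lo + t)) then (1:ℤ) else 0)
      = ∑ t ∈ range (hi.succ - lo), (if d ∣ ((x + (lo-1)) + t + 1) then (1:ℤ) else 0) := by
        refine Finset.sum_congr rfl fun t _ => ?_
        rw [show x + (lo + t) = (x + (lo-1)) + t + 1 by omega]
    _ = gdiv d ((x + (lo-1)) + (hi.succ - lo)) - gdiv d (x + (lo-1)) := cw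
    _ = gdiv d (x + hi) - gdiv d (x + (lo - 1)) := by
        rw [show (x + (lo-1)) + (hi.succ - lo) = x + hi by omega]

lemma per_e (d c M a : ℕ) (hd : 0 < d) (hc : 1 ≤ c) :
    ∑ i ∈ Icc 1 a, ((∑ j ∈ Icc 1 (M+1), (if d ∣ (i+j-1) then (1:ℕ) else 0))
        + ∑ j ∈ Icc (M+2) (M+i), (if d ∣ (i+j-1) then (1:ℕ) else 0))
      ≤ ∑ i ∈ Icc 1 a, ((∑ j ∈ Icc 1 (M+1), (if d ∣ (c+i+j-1) then (1:ℕ) else 0))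
        + ∑ j ∈ Icc (M+2) (M+i), (if d ∣ (2*c+i+j-1) then (1:ℕ) else 0)) := by
  rw [← Nat.cast_le (α := ℤ)]
  push_cast [apply_ite (Nat.cast : ℕ → ℤ)]
  have conv_den : ∑ i ∈ Icc 1 a, ((∑ j ∈ Icc 1 (M+1), (if d ∣ (i+j-1) then (1:ℤ) else 0))
        + ∑ j ∈ Icc (M+2) (M+i), (if d ∣ (i+j-1) then (1:ℤ) else 0))
      = ∑ i ∈ Icc 1 a, ((gdiv d ((i-1)+(M+1)) - gdiv d (i-1))
        + (gdiv d ((i+M)+(i-1)) - gdiv d (i+M))) := by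
    refine Finset.sum_congr rfl fun i hi => ?_
    have hi1 : 1 ≤ i := (Finset.mem_Icc.mp hi).1
    have e1 : ∑ j ∈ Icc 1 (M+1), (if d ∣ (i+j-1) then (1:ℤ) else 0)
        = ∑ j ∈ Icc 1 (M+1), (if d ∣ ((i-1)+j) then (1:ℤ) else 0) := by
      refine Finset.sum_congr rfl fun j hj => ?_
      have := (Finset.mem_Icc.mp hj).1
      rw [show i+j-1 = (i-1)+j by omega]
    have e2 : ∑ j ∈ Icc (M+2) (M+i), (if d ∣ (i+j-1) then (1:ℤ) else 0)
        = ∑ j ∈ Icc (M+2) (M+i), (if d ∣ ((i-1)+j) then (1:ℤ) else 0) := by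
      refine Finset.sum_congr rfl fun j hj => ?_
      have := (Finset.mem_Icc.mp hj).1
      rw [show i+j-1 = (i-1)+j by omega]
    rw [e1, e2, sum_ind_Icc d (i-1) 1 (M+1) le_rfl (by omega),
        sum_ind_Icc d (i-1) (M+2) (M+i) (by omega) (by omega)]
    rw [show (i-1) + (1-1) = i-1 by omega, show (i-1)+(M+i) = (i+M)+(i-1) by omega,
        show (i-1)+((M+2)-1) = i+M by omega]
  have conv_num : ∑ i ∈ Icc 1 a, ((∑ j ∈ Icc 1 (M+1), (if d ∣ (c+i+j-1) then (1:ℤ) else 0))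
        + ∑ j ∈ Icc (M+2) (M+i), (if d ∣ (2*c+i+j-1) then (1:ℤ) else 0))
      = ∑ i ∈ Icc 1 a, ((gdiv d ((c+i-1)+(M+1)) - gdiv d (c+i-1))
        + (gdiv d ((2*c+i+M)+(i-1)) - gdiv d (2*c+i+M))) := by
    refine Finset.sum_congr rfl fun i hi => ?_
    have hi1 : 1 ≤ i := (Finset.mem_Icc.mp hi).1
    have e1 : ∑ j ∈ Icc 1 (M+1), (if d ∣ (c+i+j-1) then (1:ℤ) else 0)
        = ∑ j ∈ Icc 1 (M+1), (if d ∣ ((c+i-1)+j) then (1:ℤ) else 0) := by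
      refine Finset.sum_congr rfl fun j hj => ?_
      have := (Finset.mem_Icc.mp hj).1
      rw [show c+i+j-1 = (c+i-1)+j by omega]
    have e2 : ∑ j ∈ Icc (M+2) (M+i), (if d ∣ (2*c+i+j-1) then (1:ℤ) else 0)
        = ∑ j ∈ Icc (M+2) (M+i), (if d ∣ ((2*c+i-1)+j) then (1:ℤ) else 0) := by
      refine Finset.sum_congr rfl fun j hj => ?_
      have := (Finset.mem_Icc.mp hj).1
      rw [show 2*c+i+j-1 = (2*c+i-1)+j by omega]
    rw [e1, e2, sum_ind_Icc d (c+i-1) 1 (M+1) le_rfl (by omega),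
        sum_ind_Icc d (2*c+i-1) (M+2) (M+i) (by omega) (by omega)]
    rw [show (c+i-1) + (1-1) = c+i-1 by omega,
        show (c+i-1)+(M+1) = (c+i-1)+(M+1) from rfl,
        show (2*c+i-1)+(M+i) = (2*c+i+M)+(i-1) by omega,
        show (2*c+i-1)+((M+2)-1) = 2*c+i+M by omega]
  rw [conv_den, conv_num]
  exact key_ineq' d c M a hd

lemma dvd_lemma (a c M : ℕ) (hc : 0 < c) :
    (∏ i ∈ Icc 1 a, ((∏ j ∈ Icc 1 (M+1), (i+j-1)) * ∏ j ∈ Icc (M+2) (M+i), (i+j-1)))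
      ∣ ∏ i ∈ Icc 1 a, ((∏ j ∈ Icc 1 (M+1), (c+i+j-1)) * ∏ j ∈ Icc (M+2) (M+i), (2*c+i+j-1)) := by
  have hDpos : 0 < ∏ i ∈ Icc 1 a, ((∏ j ∈ Icc 1 (M+1), (i+j-1)) * ∏ j ∈ Icc (M+2) (M+i), (i+j-1)) := by
    refine Finset.prod_pos fun i hi => Nat.mul_pos ?_ ?_ <;>
      refine Finset.prod_pos fun j hj => ?_ <;>
      · have h1 := (Finset.mem_Icc.mp hi).1
        have h2 := (Finset.mem_Icc.mp hj).1
        omega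
  have hNpos : 0 < ∏ i ∈ Icc 1 a, ((∏ j ∈ Icc 1 (M+1), (c+i+j-1)) * ∏ j ∈ Icc (M+2) (M+i), (2*c+i+j-1)) := by
    refine Finset.prod_pos fun i hi => Nat.mul_pos ?_ ?_ <;>
      refine Finset.prod_pos fun j hj => ?_ <;>
      · have h1 := (Finset.mem_Icc.mp hi).1
        have h2 := (Finset.mem_Icc.mp hj).1
        omega
  rw [← Nat.factorization_le_iff_dvd hDpos.ne' hNpos.ne', Finsupp.le_def]
  intro p
  by_cases hp : p.Prime
  swap
  · simp [Nat.factorization_eq_zero_of_not_prime _ hp]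
  have hvp : ∀ x : ℕ, 1 ≤ x → x ≤ 2*c+2*a+M+1 →
      x.factorization p = ∑ e ∈ Icc 1 (2*c+2*a+M+1), (if p^e ∣ x then (1:ℕ) else 0) := by
    intro x h1 h2
    have hbd : x ≤ p ^ (2*c+2*a+M+1) :=
      le_trans h2 (le_of_lt (lt_of_lt_of_le Nat.lt_two_pow_self
        (Nat.pow_le_pow_left hp.two_le _)))
    rw [Nat.factorization_eq_card_pow_dvd x hp,
        Nat.Ico_filter_pow_dvd_eq hp (by omega) hbd]
    exact Finset.card_filter _ _
  have eD : (∏ i ∈ Icc 1 a, ((∏ j ∈ Icc 1 (M+1), (i+j-1)) * ∏ j ∈ Icc (M+2) (M+i), (i+j-1))).factorization p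
      = ∑ e ∈ Icc 1 (2*c+2*a+M+1), ∑ i ∈ Icc 1 a,
          ((∑ j ∈ Icc 1 (M+1), (if p^e ∣ (i+j-1) then (1:ℕ) else 0))
            + ∑ j ∈ Icc (M+2) (M+i), (if p^e ∣ (i+j-1) then (1:ℕ) else 0)) := by
    rw [Nat.factorization_prod (fun i hi => by
      have h1 := (Finset.mem_Icc.mp hi).1
      refine Nat.mul_ne_zero ?_ ?_ <;> refine (Finset.prod_pos fun j hj => ?_).ne' <;>
        · have h2 := (Finset.mem_Icc.mp hj).1
          omega), Finset.sum_apply']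
    rw [Finset.sum_comm]
    refine Finset.sum_congr rfl fun i hi => ?_
    have hi1 := (Finset.mem_Icc.mp hi).1
    have hi2 := (Finset.mem_Icc.mp hi).2
    have hz1 : (∏ j ∈ Icc 1 (M+1), (i+j-1)) ≠ 0 := by
      refine (Finset.prod_pos fun j hj => ?_).ne'
      have := (Finset.mem_Icc.mp hj).1; omega
    have hz2 : (∏ j ∈ Icc (M+2) (M+i), (i+j-1)) ≠ 0 := by
      refine (Finset.prod_pos fun j hj => ?_).ne'
      have := (Finset.mem_Icc.mp hj).1; omega
    rw [Nat.factorization_mul hz1 hz2, Finsupp.add_apply,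
        Nat.factorization_prod (fun j hj => by have := (Finset.mem_Icc.mp hj).1; omega),
        Nat.factorization_prod (fun j hj => by have := (Finset.mem_Icc.mp hj).1; omega),
        Finset.sum_apply', Finset.sum_apply']
    have c1 : ∑ j ∈ Icc 1 (M+1), (i+j-1).factorization p
        = ∑ j ∈ Icc 1 (M+1), ∑ e ∈ Icc 1 (2*c+2*a+M+1), (if p^e ∣ (i+j-1) then (1:ℕ) else 0) := by
      refine Finset.sum_congr rfl fun j hj => ?_
      have h2 := Finset.mem_Icc.mp hj
      exact hvp _ (by omega) (by omega)
    have c2 : ∑ j ∈ Icc (M+2) (M+i), (i+j-1).factorization p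
        = ∑ j ∈ Icc (M+2) (M+i), ∑ e ∈ Icc 1 (2*c+2*a+M+1), (if p^e ∣ (i+j-1) then (1:ℕ) else 0) := by
      refine Finset.sum_congr rfl fun j hj => ?_
      have h2 := Finset.mem_Icc.mp hj
      exact hvp _ (by omega) (by omega)
    rw [c1, c2, Finset.sum_comm, Finset.sum_comm (s := Icc (M+2) (M+i))]
    exact (Finset.sum_add_distrib).symm
  have eN : (∏ i ∈ Icc 1 a, ((∏ j ∈ Icc 1 (M+1), (c+i+j-1)) * ∏ j ∈ Icc (M+2) (M+i), (2*c+i+j-1))).factorization p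
      = ∑ e ∈ Icc 1 (2*c+2*a+M+1), ∑ i ∈ Icc 1 a,
          ((∑ j ∈ Icc 1 (M+1), (if p^e ∣ (c+i+j-1) then (1:ℕ) else 0))
            + ∑ j ∈ Icc (M+2) (M+i), (if p^e ∣ (2*c+i+j-1) then (1:ℕ) else 0)) := by
    rw [Nat.factorization_prod (fun i hi => by
      have h1 := (Finset.mem_Icc.mp hi).1
      refine Nat.mul_ne_zero ?_ ?_ <;> refine (Finset.prod_pos fun j hj => ?_).ne' <;>
        · have h2 := (Finset.mem_Icc.mp hj).1
          omega), Finset.sum_apply']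
    rw [Finset.sum_comm]
    refine Finset.sum_congr rfl fun i hi => ?_
    have hi1 := (Finset.mem_Icc.mp hi).1
    have hi2 := (Finset.mem_Icc.mp hi).2
    have hz1 : (∏ j ∈ Icc 1 (M+1), (c+i+j-1)) ≠ 0 := by
      refine (Finset.prod_pos fun j hj => ?_).ne'
      have := (Finset.mem_Icc.mp hj).1; omega
    have hz2 : (∏ j ∈ Icc (M+2) (M+i), (2*c+i+j-1)) ≠ 0 := by
      refine (Finset.prod_pos fun j hj => ?_).ne'
      have := (Finset.mem_Icc.mp hj).1; omega
    rw [Nat.factorization_mul hz1 hz2, Finsupp.add_apply,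
        Nat.factorization_prod (fun j hj => by have := (Finset.mem_Icc.mp hj).1; omega),
        Nat.factorization_prod (fun j hj => by have := (Finset.mem_Icc.mp hj).1; omega),
        Finset.sum_apply', Finset.sum_apply']
    have c1 : ∑ j ∈ Icc 1 (M+1), (c+i+j-1).factorization p
        = ∑ j ∈ Icc 1 (M+1), ∑ e ∈ Icc 1 (2*c+2*a+M+1), (if p^e ∣ (c+i+j-1) then (1:ℕ) else 0) := by
      refine Finset.sum_congr rfl fun j hj => ?_
      have h2 := Finset.mem_Icc.mp hj
      exact hvp _ (by omega) (by omega)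
    have c2 : ∑ j ∈ Icc (M+2) (M+i), (2*c+i+j-1).factorization p
        = ∑ j ∈ Icc (M+2) (M+i), ∑ e ∈ Icc 1 (2*c+2*a+M+1), (if p^e ∣ (2*c+i+j-1) then (1:ℕ) else 0) := by
      refine Finset.sum_congr rfl fun j hj => ?_
      have h2 := Finset.mem_Icc.mp hj
      exact hvp _ (by omega) (by omega)
    rw [c1, c2, Finset.sum_comm, Finset.sum_comm (s := Icc (M+2) (M+i))]
    exact (Finset.sum_add_distrib).symm
  rw [eD, eN]
  exact Finset.sum_le_sum fun e _ => per_e (p^e) c M a (pow_pos hp.pos e) hc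

/-- Proctor's product formula for the number of lozenge tilings of a halved hexagon. -/
def proctorProduct (a b c : ℕ) : ℚ :=
  ∏ i ∈ Finset.Icc 1 a,
    ((∏ j ∈ Finset.Icc 1 (b - a + 1), ((c : ℚ) + i + j - 1) / ((i : ℚ) + j - 1)) *
      ∏ j ∈ Finset.Icc (b - a + 2) (b - a + i), (2 * (c : ℚ) + i + j - 1) / ((i : ℚ) + j - 1))

theorem proctorProduct_is_positive_integer (a b c : ℕ)
    (ha : 0 < a) (hb : 0 < b) (hc : 0 < c) (hab : a ≤ b) :
    ∃ N : ℕ, 0 < N ∧ proctorProduct a b c = N := by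
  obtain ⟨M, hM⟩ : ∃ M, b - a = M := ⟨b - a, rfl⟩
  have hDpos : 0 < ∏ i ∈ Icc 1 a, ((∏ j ∈ Icc 1 (M+1), (i+j-1)) * ∏ j ∈ Icc (M+2) (M+i), (i+j-1)) := by
    refine Finset.prod_pos fun i hi => Nat.mul_pos ?_ ?_ <;>
      refine Finset.prod_pos fun j hj => ?_ <;>
      · have h1 := (Finset.mem_Icc.mp hi).1
        have h2 := (Finset.mem_Icc.mp hj).1
        omega
  obtain ⟨K, hK⟩ := dvd_lemma a c M hc
  have hKpos : 0 < K := by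
    rcases Nat.eq_zero_or_pos K with h | h
    · rw [h, Nat.mul_zero] at hK
      have hNpos : 0 < ∏ i ∈ Icc 1 a, ((∏ j ∈ Icc 1 (M+1), (c+i+j-1)) * ∏ j ∈ Icc (M+2) (M+i), (2*c+i+j-1)) := by
        refine Finset.prod_pos fun i hi => Nat.mul_pos ?_ ?_ <;>
          refine Finset.prod_pos fun j hj => ?_ <;>
          · have h1 := (Finset.mem_Icc.mp hi).1
            have h2 := (Finset.mem_Icc.mp hj).1
            omega
      omega
    · exact h
  refine ⟨K, hKpos, ?_⟩
  have hD0 : ((∏ i ∈ Icc 1 a, ((∏ j ∈ Icc 1 (M+1), (i+j-1)) * ∏ j ∈ Icc (M+2) (M+i), (i+j-1)) : ℕ) : ℚ) ≠ 0 :=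
    Nat.cast_ne_zero.mpr hDpos.ne'
  have hcast : proctorProduct a b c
      = ((∏ i ∈ Icc 1 a, ((∏ j ∈ Icc 1 (M+1), (c+i+j-1)) * ∏ j ∈ Icc (M+2) (M+i), (2*c+i+j-1)) : ℕ) : ℚ)
        / ((∏ i ∈ Icc 1 a, ((∏ j ∈ Icc 1 (M+1), (i+j-1)) * ∏ j ∈ Icc (M+2) (M+i), (i+j-1)) : ℕ) : ℚ) := by
    unfold proctorProduct
    rw [hM]
    have step1 : ∏ i ∈ Icc 1 a,
        ((∏ j ∈ Icc 1 (M + 1), ((c : ℚ) + i + j - 1) / ((i : ℚ) + j - 1)) *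
          ∏ j ∈ Icc (M + 2) (M + i), (2 * (c : ℚ) + i + j - 1) / ((i : ℚ) + j - 1))
        = ∏ i ∈ Icc 1 a,
          (((∏ j ∈ Icc 1 (M+1), ((c+i+j-1 : ℕ) : ℚ)) * ∏ j ∈ Icc (M+2) (M+i), ((2*c+i+j-1 : ℕ) : ℚ))
            / ((∏ j ∈ Icc 1 (M+1), ((i+j-1 : ℕ) : ℚ)) * ∏ j ∈ Icc (M+2) (M+i), ((i+j-1 : ℕ) : ℚ))) := by
      refine Finset.prod_congr rfl fun i hi => ?_
      have hi1 : 1 ≤ i := (Finset.mem_Icc.mp hi).1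
      have q1 : ∏ j ∈ Icc 1 (M+1), ((c : ℚ) + i + j - 1) / ((i : ℚ) + j - 1)
          = ∏ j ∈ Icc 1 (M+1), (((c+i+j-1 : ℕ) : ℚ) / ((i+j-1 : ℕ) : ℚ)) := by
        refine Finset.prod_congr rfl fun j hj => ?_
        have hj1 : 1 ≤ j := (Finset.mem_Icc.mp hj).1
        have e1 : ((c+i+j-1 : ℕ) : ℚ) = (c : ℚ) + i + j - 1 := by
          rw [Nat.cast_sub (by omega : 1 ≤ c+i+j)]
          push_cast
          ring
        have e2 : ((i+j-1 : ℕ) : ℚ) = (i : ℚ) + j - 1 := by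
          rw [Nat.cast_sub (by omega : 1 ≤ i+j)]
          push_cast
          ring
        rw [e1, e2]
      have q2 : ∏ j ∈ Icc (M+2) (M+i), (2 * (c : ℚ) + i + j - 1) / ((i : ℚ) + j - 1)
          = ∏ j ∈ Icc (M+2) (M+i), (((2*c+i+j-1 : ℕ) : ℚ) / ((i+j-1 : ℕ) : ℚ)) := by
        refine Finset.prod_congr rfl fun j hj => ?_
        have hj1 : M+2 ≤ j := (Finset.mem_Icc.mp hj).1
        have e1 : ((2*c+i+j-1 : ℕ) : ℚ) = 2 * (c : ℚ) + i + j - 1 := by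
          rw [Nat.cast_sub (by omega : 1 ≤ 2*c+i+j)]
          push_cast
          ring
        have e2 : ((i+j-1 : ℕ) : ℚ) = (i : ℚ) + j - 1 := by
          rw [Nat.cast_sub (by omega : 1 ≤ i+j)]
          push_cast
          ring
        rw [e1, e2]
      rw [q1, q2, Finset.prod_div_distrib, Finset.prod_div_distrib, div_mul_div_comm]
    rw [step1, Finset.prod_div_distrib]
    congr 1 <;>
    · rw [Nat.cast_prod]
      exact Finset.prod_congr rfl fun i _ => by rw [Nat.cast_mul, Nat.cast_prod, Nat.cast_prod]
  rw [hcast, hK, Nat.cast_mul, mul_comm, mul_div_assoc, div_self hD0, mul_one]
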